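/- Let S be an axis-parallel square containing the rectangle R_{abcd}, and let ℓ be a segment of L disjoint from R_{abcd} that intersects both the vertical line λ_a through the left side of R_{abcd} and the horizontal line λ_d through the bottom side of R_{abcd}, at points outside R_{abcd} (to the lower-left). If ℓ_p is a segment of L disjoint from R_{abcd} intersecting λ_a and λ_d such that its intersection points with λ_a and λ_d are farthest (lowest on λ_a and leftmost on λ_d) among all such segments, then any axis-parallel square S containing R_{abcd} that intersects ℓ_p also intersects ℓ. -/
import Mathlib


/-- If `ℓp` is the farthest segment crossing the lower-left corner
region of the rectangle `R_{abcd}` (lowest on the left supporting line, leftmost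
on the bottom supporting line), then any axis-parallel square containing
`R_{abcd}` that hits `ℓp` also hits any other such segment `ℓ`. -/
theorem stmt2 (ax cx dy ty : ℝ) (hx : ax ≤ cx) (hy : dy ≤ ty)
    (pℓ qℓ pp qp : ℝ)
    (hpp : pp ≤ pℓ) (hpℓ : pℓ ≤ dy) (hqp : qp ≤ qℓ) (hqℓ : qℓ ≤ ax)
    (ℓ ℓp : Set (ℝ × ℝ))
    (hℓ : ℓ = segment ℝ (ax, pℓ) (qℓ, dy))
    (hℓp : ℓp = segment ℝ (ax, pp) (qp, dy))
    (a b s : ℝ) (hs : 0 ≤ s)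
    (hR : Set.Icc ax cx ×ˢ Set.Icc dy ty ⊆
          Set.Icc a (a + s) ×ˢ Set.Icc b (b + s))
    (hhit : ((Set.Icc a (a + s) ×ˢ Set.Icc b (b + s)) ∩ ℓp).Nonempty) :
    ((Set.Icc a (a + s) ×ˢ Set.Icc b (b + s)) ∩ ℓ).Nonempty := by
  obtain ⟨z, hzS, hzℓp⟩ := hhit
  rw [hℓp] at hzℓp
  obtain ⟨u, v, hu, hv, huv, hz⟩ := hzℓp
  have hcorner := hR (show ((ax, dy) : ℝ × ℝ) ∈ Set.Icc ax cx ×ˢ Set.Icc dy ty from ⟨⟨le_refl ax, hx⟩, le_refl dy, hy⟩)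
  obtain ⟨⟨ha1, ha2⟩, hb1, hb2⟩ := hcorner
  obtain ⟨⟨hz1a, _⟩, hz2b, _⟩ := hzS
  have hz1 : z.1 = u * ax + v * qp := by rw [← hz]; simp
  have hz2 : z.2 = u * pp + v * dy := by rw [← hz]; simp
  dsimp only at ha1 ha2 hb1 hb2
  refine ⟨(u * ax + v * qℓ, u * pℓ + v * dy), ⟨⟨?_, ?_⟩, ?_, ?_⟩, ?_⟩
  · dsimp only
    nlinarith [mul_nonneg hv (sub_nonneg.2 hqp)]
  · dsimp only
    have key : u * ax + v * ax = ax := by rw [← add_mul, huv, one_mul]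
    nlinarith [mul_nonneg hv (sub_nonneg.2 hqℓ)]
  · dsimp only
    nlinarith [mul_nonneg hu (sub_nonneg.2 hpp)]
  · dsimp only
    have key : u * dy + v * dy = dy := by rw [← add_mul, huv, one_mul]
    nlinarith [mul_nonneg hu (sub_nonneg.2 hpℓ)]
  · rw [hℓ]
    exact ⟨u, v, hu, hv, huv, by simp [Prod.ext_iff]⟩
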